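/- In one space dimension, if u* is a positive solution of d u'' + u(m − u) = 0 on (0,L) with Neumann conditions u'(0) = u'(L) = 0, where m is continuous and positive, then ∫_0^L u* dx ≤ 3 ∫_0^L m dx. -/

import Mathlib

open Set intervalIntegral

theorem stmt_1 (d L : ℝ) (hd : 0 < d) (hL : 0 < L)
    (m u : ℝ → ℝ)
    (hm : ContinuousOn m (Icc 0 L))
    (hmpos : ∀ x ∈ Icc (0:ℝ) L, 0 < m x)
    (hu : ContDiff ℝ 2 u)
    (hupos : ∀ x ∈ Icc (0:ℝ) L, 0 < u x)
    (heq : ∀ x ∈ Ioo (0:ℝ) L, d * deriv (deriv u) x + u x * (m x - u x) = 0)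
    (hbc0 : deriv u 0 = 0) (hbcL : deriv u L = 0) :
    ∫ x in (0:ℝ)..L, u x ≤ 3 * ∫ x in (0:ℝ)..L, m x := by
  -- regularity facts
  have hudiff : Differentiable ℝ u := hu.differentiable (by norm_num)
  have hu1 : ContDiff ℝ 1 (deriv u) := by
    have hu2 : ContDiff ℝ ((1 : ℕ∞) + 1) u := by
      have : ((1:ℕ∞) + 1 : WithTop ℕ∞) = (2 : WithTop ℕ∞) := by norm_num
      rw [this]; exact hu
    have := (contDiff_succ_iff_deriv.mp hu2).2.2
    exact_mod_cast this
  have hu'diff : Differentiable ℝ (deriv u) := hu1.differentiable one_ne_zero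
  have hucont : Continuous u := hudiff.continuous
  have hu'cont : Continuous (deriv u) := hu'diff.continuous
  have hu''cont : Continuous (deriv (deriv u)) := hu1.continuous_deriv le_rfl
  have hLle : (0:ℝ) ≤ L := hL.le
  have huIcc : uIcc (0:ℝ) L = Icc 0 L := uIcc_of_le hLle
  have hune : ∀ x ∈ Icc (0:ℝ) L, u x ≠ 0 := fun x hx => (hupos x hx).ne'
  -- extend the equation to the closed interval by continuity
  have heq' : ∀ x ∈ Icc (0:ℝ) L, d * deriv (deriv u) x + u x * (m x - u x) = 0 := by
    set f : ℝ → ℝ := fun x => d * deriv (deriv u) x + u x * (m x - u x) with hf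
    have hfc : ContinuousOn f (Icc 0 L) := by
      apply ContinuousOn.add
      · exact (continuousOn_const.mul hu''cont.continuousOn)
      · exact hucont.continuousOn.mul (hm.sub hucont.continuousOn)
    have hclos : closure (Ioo (0:ℝ) L) = Icc 0 L := closure_Ioo hL.ne
    intro x hx
    have hxc : x ∈ closure (Ioo (0:ℝ) L) := hclos ▸ hx
    have hnb : (nhdsWithin x (Ioo (0:ℝ) L)).NeBot :=
      mem_closure_iff_nhdsWithin_neBot.mp hxc
    have h1 : Filter.Tendsto f (nhdsWithin x (Ioo (0:ℝ) L)) (nhds (f x)) :=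
      ((hfc x hx).tendsto).mono_left (nhdsWithin_mono x Ioo_subset_Icc_self)
    have h2 : Filter.Tendsto f (nhdsWithin x (Ioo (0:ℝ) L)) (nhds 0) := by
      apply Filter.Tendsto.congr' _ tendsto_const_nhds
      filter_upwards [self_mem_nhdsWithin] with y hy
      exact (heq y hy).symm
    exact tendsto_nhds_unique h1 h2
  -- the key pointwise estimate: 3 d u'^2 ≤ 2 u^3 on [0, L]
  have hH : ∀ x ∈ Icc (0:ℝ) L, 3 * d * (deriv u x)^2 ≤ 2 * (u x)^3 := by
    set H : ℝ → ℝ := fun x => 3 * d * (deriv u x)^2 - 2 * (u x)^3 with hHdef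
    have hHcont : Continuous H := by
      apply Continuous.sub
      · exact (continuous_const.mul (hu'cont.pow 2))
      · exact continuous_const.mul (hucont.pow 3)
    obtain ⟨c, hc, hcmax⟩ := (isCompact_Icc (a := (0:ℝ)) (b := L)).exists_isMaxOn
      (nonempty_Icc.mpr hLle) hHcont.continuousOn
    have hu'c : deriv u c = 0 := by
      rcases eq_or_lt_of_le hc.1 with h0 | h0
      · rw [← h0]; exact hbc0
      rcases eq_or_lt_of_le hc.2 with hLc | hLc
      · rw [hLc]; exact hbcL
      -- interior max
      have hloc : IsLocalMax H c := hcmax.isLocalMax (Icc_mem_nhds h0 hLc)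
      have hder : HasDerivAt H
          (3 * d * ((2:ℕ) * deriv u c ^ (2-1) * deriv (deriv u) c)
            - 2 * ((3:ℕ) * u c ^ (3-1) * deriv u c)) c := by
        exact (((hu'diff c).hasDerivAt.pow 2).const_mul (3*d)).sub
          (((hudiff c).hasDerivAt.pow 3).const_mul 2)
      have h0' : deriv H c = 0 := hloc.deriv_eq_zero
      rw [hder.deriv] at h0'
      have e1 : d * deriv (deriv u) c = u c * (u c - m c) := by
        have h := heq' c hc; linarith
      have hkey : deriv u c * (u c * m c) = 0 := by
        push_cast at h0'
        linear_combination (deriv u c) * e1 - (1/6) * h0'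
      rcases mul_eq_zero.mp hkey with h | h
      · exact h
      · exact absurd h (ne_of_gt (mul_pos (hupos c hc) (hmpos c hc)))
    have hc0 : H c ≤ 0 := by
      have hcu := hupos c hc
      simp only [hHdef, hu'c]
      nlinarith [pow_pos hcu 3]
    intro x hx
    have hxc := hcmax hx
    simp only [hHdef, Set.mem_setOf_eq] at hxc hc0
    linarith
  -- FTC identity for u'/u
  set ψ : ℝ → ℝ := fun x => deriv (deriv u) x / u x - (deriv u x / u x)^2 with hψdef
  have hψcont : ContinuousOn ψ (Icc 0 L) :=
    (hu''cont.continuousOn.div hucont.continuousOn hune).sub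
      ((hu'cont.continuousOn.div hucont.continuousOn hune).pow 2)
  have hFTC : ∫ x in (0:ℝ)..L, ψ x = deriv u L / u L - deriv u 0 / u 0 := by
    apply intervalIntegral.integral_eq_sub_of_hasDerivAt
    · intro x hx
      rw [huIcc] at hx
      have h1 : HasDerivAt (deriv u) (deriv (deriv u) x) x := (hu'diff x).hasDerivAt
      have h2 : HasDerivAt u (deriv u x) x := (hudiff x).hasDerivAt
      have h3 := h1.div h2 (hune x hx)
      refine h3.congr_deriv ?_
      symm
      simp only [hψdef]
      have hne := hune x hx
      have hx2 : (u x)^2 ≠ 0 := pow_ne_zero _ hne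
      rw [div_pow, div_sub_div _ _ hne hx2, div_eq_div_iff (mul_ne_zero hne hx2) hx2]
      ring
    · exact (hψcont.mono (by rw [huIcc])).intervalIntegrable
  have hFTC0 : ∫ x in (0:ℝ)..L, ψ x = 0 := by
    rw [hFTC, hbc0, hbcL]
    simp
  -- rewrite the integrand using the equation
  have hψeq : EqOn ψ (fun x => (u x - m x)/d - (deriv u x / u x)^2) (uIcc 0 L) := by
    rw [huIcc]
    intro x hx
    have h := heq' x hx
    have hu0 := hune x hx
    simp only [hψdef]
    have : deriv (deriv u) x / u x = (u x - m x) / d := by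
      rw [div_eq_div_iff hu0 (ne_of_gt hd)]
      nlinarith [h]
    rw [this]
  -- integrability
  have Iu : IntervalIntegrable u MeasureTheory.volume 0 L :=
    (hucont.continuousOn).intervalIntegrable
  have Im : IntervalIntegrable m MeasureTheory.volume 0 L := by
    apply ContinuousOn.intervalIntegrable; rw [huIcc]; exact hm
  have Ium : IntervalIntegrable (fun x => (u x - m x)/d) MeasureTheory.volume 0 L := by
    apply ContinuousOn.intervalIntegrable; rw [huIcc]
    exact (hucont.continuousOn.sub hm).div_const d
  have Iθ : IntervalIntegrable (fun x => (deriv u x / u x)^2) MeasureTheory.volume 0 L := by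
    apply ContinuousOn.intervalIntegrable; rw [huIcc]
    exact (hu'cont.continuousOn.div hucont.continuousOn hune).pow 2
  have hsplit : ((∫ x in (0:ℝ)..L, u x) - ∫ x in (0:ℝ)..L, m x)/d
      - (∫ x in (0:ℝ)..L, (deriv u x / u x)^2) = 0 := by
    have h1 : ∫ x in (0:ℝ)..L, ψ x
        = ∫ x in (0:ℝ)..L, ((u x - m x)/d - (deriv u x / u x)^2) :=
      intervalIntegral.integral_congr hψeq
    rw [hFTC0] at h1
    rw [intervalIntegral.integral_sub Ium Iθ] at h1
    have h2 : ∫ x in (0:ℝ)..L, (u x - m x)/d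
        = ((∫ x in (0:ℝ)..L, u x) - ∫ x in (0:ℝ)..L, m x)/d := by
      rw [intervalIntegral.integral_div, intervalIntegral.integral_sub Iu Im]
    rw [h2] at h1
    linarith
  -- pointwise bound and conclusion
  have hpt : ∀ x ∈ Icc (0:ℝ) L, (deriv u x / u x)^2 ≤ (2/(3*d)) * u x := by
    intro x hx
    have hux := hupos x hx
    have h := hH x hx
    rw [div_pow, div_le_iff₀ (by positivity)]
    rw [div_mul_eq_mul_div, div_mul_eq_mul_div, le_div_iff₀ (by positivity)]
    nlinarith [h, sq_nonneg (deriv u x)]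
  have hIu2 : IntervalIntegrable (fun x => (2/(3*d)) * u x) MeasureTheory.volume 0 L :=
    (Iu.const_mul _)
  have hmono : (∫ x in (0:ℝ)..L, (deriv u x / u x)^2)
      ≤ ∫ x in (0:ℝ)..L, (2/(3*d)) * u x :=
    intervalIntegral.integral_mono_on hLle Iθ hIu2 hpt
  have hconst : ∫ x in (0:ℝ)..L, (2/(3*d)) * u x = (2/(3*d)) * ∫ x in (0:ℝ)..L, u x := by
    exact intervalIntegral.integral_const_mul _ _
  rw [hconst] at hmono
  set A := ∫ x in (0:ℝ)..L, u x
  set B := ∫ x in (0:ℝ)..L, m x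
  have hfinal : (A - B)/d ≤ (2/(3*d)) * A := by linarith
  rw [div_le_iff₀ hd] at hfinal
  have h3d : (2/(3*d)) * A * d = (2/3) * A := by field_simp
  rw [h3d] at hfinal
  linarith
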